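/- Let G be a finite DAG and let L ∈ ℤ⁺ be such that every SPP pebbling strategy of G with memory bound k·r uses at least L I/O moves. Then every MPP pebbling strategy of G with k processors and memory bound r per processor uses at least L/k I/O moves. -/

import Mathlib

open scoped Classical

/-- A relation is a DAG edge relation if its transitive closure is irreflexive
(i.e., the directed graph is acyclic). -/
def IsDag {V : Type*} (E : V → V → Prop) : Prop := Irreflexive (Relation.TransGen E)

namespace MPP

variable {V : Type*} [DecidableEq V] {k : ℕ}

/-- A configuration of multiprocessor red-blue pebbling: a set of red pebbles
for each of the `k` processors, and a set of blue pebbles. -/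
structure Conf (V : Type*) (k : ℕ) where
  red : Fin k → Finset V
  blue : Finset V

/-- Moves of multiprocessor red-blue pebbling. `save`/`load` are the parallel I/O
moves (R1-M)/(R2-M), `compute` is (R3-M), and the removals are (R4-M). -/
inductive Move (V : Type*) (k : ℕ) where
  | save (m : ℕ) (f : Fin m → Fin k) (v : Fin m → V)
  | load (m : ℕ) (f : Fin m → Fin k) (v : Fin m → V)
  | compute (m : ℕ) (f : Fin m → Fin k) (v : Fin m → V)
  | removeRed (j : Fin k) (x : V)
  | removeBlue (x : V)

/-- Add, for each `i`, the node `v i` to the red pebbles of processor `f i`. -/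
def addRed (C : Conf V k) {m : ℕ} (f : Fin m → Fin k) (v : Fin m → V) :
    Fin k → Finset V :=
  fun j => C.red j ∪ (Finset.univ.filter (fun i => f i = j)).image v

/-- The effect of a move on a configuration. -/
def apply : Move V k → Conf V k → Conf V k
  | .save _ _ v, C => ⟨C.red, C.blue ∪ Finset.univ.image v⟩
  | .load _ f v, C => ⟨addRed C f v, C.blue⟩
  | .compute _ f v, C => ⟨addRed C f v, C.blue⟩
  | .removeRed j x, C => ⟨Function.update C.red j (C.red j \ {x}), C.blue⟩
  | .removeBlue x, C => ⟨C.red, C.blue \ {x}⟩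

/-- When a move may legally be performed in a given configuration. -/
def Legal (E : V → V → Prop) : Conf V k → Move V k → Prop
  | C, .save m f v => m ≤ k ∧ Function.Injective f ∧ ∀ i, v i ∈ C.red (f i)
  | C, .load m f v => m ≤ k ∧ Function.Injective f ∧ ∀ i, v i ∈ C.blue
  | C, .compute m f v =>
      m ≤ k ∧ Function.Injective f ∧ ∀ i, ∀ u, E u (v i) → u ∈ C.red (f i)
  | _, .removeRed _ _ => True
  | _, .removeBlue _ => True

/-- A configuration respects the fast-memory bound `r` for every processor. -/
def Valid (r : ℕ) (C : Conf V k) : Prop := ∀ j, (C.red j).card ≤ r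

/-- `Run E r C ms C'` : starting from configuration `C`, the list of moves `ms`
may be legally executed (respecting the memory bound `r` throughout) and leads
to configuration `C'`. -/
inductive Run (E : V → V → Prop) (r : ℕ) : Conf V k → List (Move V k) → Conf V k → Prop
  | nil (C : Conf V k) : Run E r C [] C
  | cons {C C'' : Conf V k} {mv : Move V k} {ms : List (Move V k)} :
      Legal E C mv → Valid r (apply mv C) → Run E r (apply mv C) ms C'' →
      Run E r C (mv :: ms) C''

/-- Cost of a single move: `g` for I/O, `1` for compute, `0` for removal. -/
def moveCost (g : ℕ) : Move V k → ℕ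
  | .save .. => g
  | .load .. => g
  | .compute .. => 1
  | .removeRed .. => 0
  | .removeBlue .. => 0

/-- Total cost of a sequence of moves. -/
def cost (g : ℕ) (ms : List (Move V k)) : ℕ := (ms.map (moveCost g)).sum

def isIO : Move V k → Bool
  | .save .. => true
  | .load .. => true
  | _ => false

/-- The number of I/O moves in a sequence of moves. -/
def ioCount (ms : List (Move V k)) : ℕ := (ms.filter isIO).length

def isCompute : Move V k → Bool
  | .compute .. => true
  | _ => false

/-- The number of compute moves in a sequence of moves. -/
def computeCount (ms : List (Move V k)) : ℕ := (ms.filter isCompute).length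

/-- A sink of the DAG: a node with no outgoing edge. -/
def IsSink (E : V → V → Prop) (v : V) : Prop := ∀ u, ¬ E v u

/-- A terminal configuration: every sink carries at least one pebble. -/
def Terminal (E : V → V → Prop) (C : Conf V k) : Prop :=
  ∀ v, IsSink E v → v ∈ C.blue ∨ ∃ j, v ∈ C.red j

/-- The initial (all-empty) configuration. -/
def init (V : Type*) (k : ℕ) : Conf V k := ⟨fun _ => ∅, ∅⟩

/-- `ms` is a pebbling strategy: a legal run from the empty configuration ending
in a terminal configuration. -/
def IsPebbling (E : V → V → Prop) (r : ℕ) (ms : List (Move V k)) : Prop :=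
  ∃ Cf, Run E r (init V k) ms Cf ∧ Terminal E Cf

/-- The optimal (minimum) cost of a pebbling strategy with `k` processors,
memory bound `r` per processor, and I/O cost `g`. -/
noncomputable def optCost (E : V → V → Prop) (k r g : ℕ) : ℕ :=
  sInf {c | ∃ ms : List (Move V k), IsPebbling E r ms ∧ cost g ms = c}

/-- The minimum number of I/O moves among all minimum-cost pebbling strategies. -/
noncomputable def optIO (E : V → V → Prop) (k r g : ℕ) : ℕ :=
  sInf {q | ∃ ms : List (Move V k),
    IsPebbling E r ms ∧ cost g ms = optCost E k r g ∧ ioCount ms = q}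

/-- The maximum in-degree `Δ_in` of the DAG. -/
noncomputable def maxInDeg (E : V → V → Prop) [Fintype V] : ℕ :=
  Finset.univ.sup fun v => (Finset.univ.filter fun u => E u v).card

/-- The set of nodes computed by a move. -/
def computes : Move V k → Set V
  | .compute _ _ v => Set.range v
  | _ => ∅

/-- `x` is computed by the move at position `s` of `ms`. -/
def ComputedAt (ms : List (Move V k)) (s : ℕ) (x : V) : Prop :=
  ∃ mv, ms[s]? = some mv ∧ x ∈ computes mv

/-- The set of nodes computed by some move strictly before position `t`. -/
def computedBefore (ms : List (Move V k)) (t : ℕ) : Set V :=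
  {x | ∃ s < t, ComputedAt ms s x}

/-- `x` is ready at position `t`: it has not yet been computed, but all its
in-neighbors have been. -/
def Ready (E : V → V → Prop) (ms : List (Move V k)) (t : ℕ) (x : V) : Prop :=
  x ∉ computedBefore ms t ∧ ∀ u, E u x → u ∈ computedBefore ms t

/-- The number of nodes that are ready at position `t`. -/
noncomputable def readyCount (E : V → V → Prop) [Fintype V]
    (ms : List (Move V k)) (t : ℕ) : ℕ :=
  (Finset.univ.filter (Ready E ms t)).card

end MPP

namespace SPP

variable {V : Type*} [DecidableEq V]

/-- A configuration of single-processor red-blue pebbling. -/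
structure Conf (V : Type*) where
  red : Finset V
  blue : Finset V

/-- Moves of single-processor red-blue pebbling: `load` is (R1-S), `save` is
(R2-S), `compute` is (R3-S), and the removals are (R4-S). -/
inductive Move (V : Type*) where
  | load (v : V)
  | save (v : V)
  | compute (v : V)
  | removeRed (v : V)
  | removeBlue (v : V)

/-- The effect of a move on a configuration. -/
def apply : Move V → Conf V → Conf V
  | .load v, C => ⟨insert v C.red, C.blue⟩
  | .save v, C => ⟨C.red, insert v C.blue⟩
  | .compute v, C => ⟨insert v C.red, C.blue⟩
  | .removeRed v, C => ⟨C.red.erase v, C.blue⟩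
  | .removeBlue v, C => ⟨C.red, C.blue.erase v⟩

/-- When a move may legally be performed. -/
def Legal (E : V → V → Prop) : Conf V → Move V → Prop
  | C, .load v => v ∈ C.blue
  | C, .save v => v ∈ C.red
  | C, .compute v => ∀ u, E u v → u ∈ C.red
  | _, .removeRed _ => True
  | _, .removeBlue _ => True

/-- A configuration respects the fast-memory bound `r`. -/
def Valid (r : ℕ) (C : Conf V) : Prop := C.red.card ≤ r

/-- `Run E r C ms C'` : starting from configuration `C`, the list of moves `ms`
may be legally executed (respecting the memory bound `r` throughout) and leads
to configuration `C'`. -/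
inductive Run (E : V → V → Prop) (r : ℕ) : Conf V → List (Move V) → Conf V → Prop
  | nil (C : Conf V) : Run E r C [] C
  | cons {C C'' : Conf V} {mv : Move V} {ms : List (Move V)} :
      Legal E C mv → Valid r (apply mv C) → Run E r (apply mv C) ms C'' →
      Run E r C (mv :: ms) C''

def isIO : Move V → Bool
  | .load _ => true
  | .save _ => true
  | _ => false

/-- The number of I/O moves (of type (R1-S) or (R2-S)) in a sequence of moves. -/
def ioCount (ms : List (Move V)) : ℕ := (ms.filter isIO).length

def isComputeOrRemove : Move V → Bool
  | .compute _ => true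
  | .removeRed _ => true
  | .removeBlue _ => true
  | _ => false

/-- A sink of the DAG: a node with no outgoing edge. -/
def IsSink (E : V → V → Prop) (v : V) : Prop := ∀ u, ¬ E v u

/-- A terminal configuration: every sink carries a pebble. -/
def Terminal (E : V → V → Prop) (C : Conf V) : Prop :=
  ∀ v, IsSink E v → v ∈ C.blue ∨ v ∈ C.red

/-- The initial (empty) configuration. -/
def init (V : Type*) : Conf V := ⟨∅, ∅⟩

/-- `ms` is an SPP pebbling strategy with memory bound `r`. -/
def IsPebbling (E : V → V → Prop) (r : ℕ) (ms : List (Move V)) : Prop :=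
  ∃ Cf, Run E r (init V) ms Cf ∧ Terminal E Cf

end SPP


namespace MPPtoSPP
open MPP

variable {V : Type} [DecidableEq V] {k : ℕ}

/-- Union of all processors' red pebbles. -/
def unionRed (C : MPP.Conf V k) : Finset V := Finset.univ.biUnion C.red

/-- The SPP configuration simulating an MPP configuration. -/
def toSPP (C : MPP.Conf V k) : SPP.Conf V := ⟨unionRed C, C.blue⟩

/-- Translation of an MPP move to a list of SPP moves. -/
noncomputable def tr (C : MPP.Conf V k) : MPP.Move V k → List (SPP.Move V)
  | .save _ _ v => (List.ofFn v).map SPP.Move.save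
  | .load _ _ v => (List.ofFn v).map SPP.Move.load
  | .compute _ _ v => (List.ofFn v).map SPP.Move.compute
  | .removeRed j x =>
      if ∃ j', j' ≠ j ∧ x ∈ C.red j' then [] else [SPP.Move.removeRed x]
  | .removeBlue x => [SPP.Move.removeBlue x]

/-- Translation of an MPP run to a list of SPP moves. -/
noncomputable def trRun : MPP.Conf V k → List (MPP.Move V k) → List (SPP.Move V)
  | _, [] => []
  | C, mv :: ms => tr C mv ++ trRun (MPP.apply mv C) ms

lemma run_append {E : V → V → Prop} {r : ℕ} {C C' C'' : SPP.Conf V}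
    {l1 l2 : List (SPP.Move V)} (h1 : SPP.Run E r C l1 C')
    (h2 : SPP.Run E r C' l2 C'') : SPP.Run E r C (l1 ++ l2) C'' := by
  induction h1 with
  | nil => simpa using h2
  | cons hl hv _ ih => exact SPP.Run.cons hl hv (ih h2)

lemma saveRun {E : V → V → Prop} {r : ℕ} (l : List V) (C : SPP.Conf V)
    (h : ∀ x ∈ l, x ∈ C.red) (hv : C.red.card ≤ r) :
    SPP.Run E r C (l.map SPP.Move.save) ⟨C.red, C.blue ∪ l.toFinset⟩ := by
  induction l generalizing C with
  | nil => simpa using SPP.Run.nil C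
  | cons x l ih =>
    have h1 : SPP.Run E r ⟨C.red, insert x C.blue⟩ (l.map .save)
        ⟨C.red, insert x C.blue ∪ l.toFinset⟩ :=
      ih ⟨C.red, insert x C.blue⟩ (fun y hy => h y (List.mem_cons_of_mem _ hy)) hv
    have he : insert x C.blue ∪ l.toFinset = C.blue ∪ (x :: l).toFinset := by
      simp [Finset.insert_union, Finset.union_insert]
    refine SPP.Run.cons (show SPP.Legal E C (.save x) from h x List.mem_cons_self)
      ?_ ?_
    · simpa [SPP.apply, SPP.Valid] using hv
    · simpa [SPP.apply, he] using h1

lemma loadRun {E : V → V → Prop} {r : ℕ} (l : List V) (C : SPP.Conf V)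
    (h : ∀ x ∈ l, x ∈ C.blue) (hv : (C.red ∪ l.toFinset).card ≤ r) :
    SPP.Run E r C (l.map SPP.Move.load) ⟨C.red ∪ l.toFinset, C.blue⟩ := by
  induction l generalizing C with
  | nil => simpa using SPP.Run.nil C
  | cons x l ih =>
    have he : insert x C.red ∪ l.toFinset = C.red ∪ (x :: l).toFinset := by
      simp [Finset.insert_union, Finset.union_insert]
    have h1 : SPP.Run E r ⟨insert x C.red, C.blue⟩ (l.map .load)
        ⟨insert x C.red ∪ l.toFinset, C.blue⟩ :=
      ih ⟨insert x C.red, C.blue⟩ (fun y hy => h y (List.mem_cons_of_mem _ hy))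
        (by rw [he]; exact hv)
    refine SPP.Run.cons (show SPP.Legal E C (.load x) from h x List.mem_cons_self)
      ?_ ?_
    · show (insert x C.red).card ≤ r
      refine le_trans (Finset.card_le_card ?_) hv
      intro y hy
      rcases Finset.mem_insert.1 hy with rfl | hy
      · simp
      · exact Finset.mem_union_left _ hy
    · simpa [SPP.apply, he] using h1

lemma computeRun {E : V → V → Prop} {r : ℕ} (l : List V) (C : SPP.Conf V)
    (h : ∀ x ∈ l, ∀ u, E u x → u ∈ C.red) (hv : (C.red ∪ l.toFinset).card ≤ r) :
    SPP.Run E r C (l.map SPP.Move.compute) ⟨C.red ∪ l.toFinset, C.blue⟩ := by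
  induction l generalizing C with
  | nil => simpa using SPP.Run.nil C
  | cons x l ih =>
    have he : insert x C.red ∪ l.toFinset = C.red ∪ (x :: l).toFinset := by
      simp [Finset.insert_union, Finset.union_insert]
    have h1 : SPP.Run E r ⟨insert x C.red, C.blue⟩ (l.map .compute)
        ⟨insert x C.red ∪ l.toFinset, C.blue⟩ :=
      ih ⟨insert x C.red, C.blue⟩
        (fun y hy u hu => Finset.mem_insert_of_mem (h y (List.mem_cons_of_mem _ hy) u hu))
        (by rw [he]; exact hv)
    refine SPP.Run.cons
      (show SPP.Legal E C (.compute x) from h x List.mem_cons_self) ?_ ?_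
    · show (insert x C.red).card ≤ r
      refine le_trans (Finset.card_le_card ?_) hv
      intro y hy
      rcases Finset.mem_insert.1 hy with rfl | hy
      · simp
      · exact Finset.mem_union_left _ hy
    · simpa [SPP.apply, he] using h1

lemma mem_unionRed {C : MPP.Conf V k} {x : V} :
    x ∈ unionRed C ↔ ∃ j, x ∈ C.red j := by simp [unionRed]

lemma card_unionRed_le {r : ℕ} {C : MPP.Conf V k} (hv : MPP.Valid r C) :
    (unionRed C).card ≤ k * r := by
  refine le_trans Finset.card_biUnion_le ?_
  calc ∑ j : Fin k, (C.red j).card ≤ ∑ _j : Fin k, r := Finset.sum_le_sum fun j _ => hv j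
    _ = k * r := by simp [Finset.sum_const, mul_comm]

lemma unionRed_addRed {C : MPP.Conf V k} {m : ℕ} (f : Fin m → Fin k) (v : Fin m → V) :
    Finset.univ.biUnion (MPP.addRed C f v) = unionRed C ∪ (List.ofFn v).toFinset := by
  ext y
  simp only [unionRed, MPP.addRed, Finset.mem_biUnion, Finset.mem_union, Finset.mem_image,
    Finset.mem_filter, Finset.mem_univ, true_and, List.mem_toFinset, List.mem_ofFn,
    Set.mem_range]
  constructor
  · rintro ⟨j, hj | ⟨i, hi, rfl⟩⟩
    · exact Or.inl ⟨j, hj⟩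
    · exact Or.inr ⟨i, rfl⟩
  · rintro (⟨j, hj⟩ | ⟨i, rfl⟩)
    · exact ⟨j, Or.inl hj⟩
    · exact ⟨f i, Or.inr ⟨i, rfl, rfl⟩⟩

lemma step {E : V → V → Prop} {r : ℕ} (C : MPP.Conf V k) (mv : MPP.Move V k)
    (hl : MPP.Legal E C mv) (hv : MPP.Valid r (MPP.apply mv C)) :
    SPP.Run E (k * r) (toSPP C) (tr C mv) (toSPP (MPP.apply mv C)) := by
  cases mv with
  | save m f v =>
    obtain ⟨hm, hf, hvm⟩ := hl
    have := saveRun (E := E) (r := k * r) (List.ofFn v) (toSPP C)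
      (fun x hx => by
        rw [List.mem_ofFn] at hx
        obtain ⟨i, rfl⟩ := hx
        exact mem_unionRed.2 ⟨f i, hvm i⟩)
      (card_unionRed_le (r := r) (C := C) hv)
    have he : (List.ofFn v).toFinset = Finset.univ.image v := by
      ext y; simp [List.mem_ofFn]
    simpa [tr, toSPP, unionRed, MPP.apply, he] using this
  | load m f v =>
    obtain ⟨hm, hf, hvm⟩ := hl
    have hcard : ((toSPP C).red ∪ (List.ofFn v).toFinset).card ≤ k * r := by
      have : (toSPP C).red ∪ (List.ofFn v).toFinset =
          unionRed (MPP.apply (.load m f v) C) := by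
        show unionRed C ∪ _ = _
        rw [show unionRed (MPP.apply (.load m f v) C)
            = Finset.univ.biUnion (MPP.addRed C f v) from rfl, unionRed_addRed]
      rw [this]
      exact card_unionRed_le hv
    have := loadRun (E := E) (r := k * r) (List.ofFn v) (toSPP C)
      (fun x hx => by
        rw [List.mem_ofFn] at hx
        obtain ⟨i, rfl⟩ := hx
        exact hvm i) hcard
    have he : unionRed C ∪ (List.ofFn v).toFinset
        = unionRed (MPP.apply (.load m f v) C) := by
      rw [show unionRed (MPP.apply (.load m f v) C)
          = Finset.univ.biUnion (MPP.addRed C f v) from rfl, unionRed_addRed]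
    simpa [tr, toSPP, he, show (MPP.apply (.load m f v) C).blue = C.blue from rfl] using this
  | compute m f v =>
    obtain ⟨hm, hf, hvm⟩ := hl
    have hcard : ((toSPP C).red ∪ (List.ofFn v).toFinset).card ≤ k * r := by
      have : (toSPP C).red ∪ (List.ofFn v).toFinset =
          unionRed (MPP.apply (.compute m f v) C) := by
        rw [show unionRed (MPP.apply (.compute m f v) C)
            = Finset.univ.biUnion (MPP.addRed C f v) from rfl, unionRed_addRed]
        rfl
      rw [this]
      exact card_unionRed_le hv
    have := computeRun (E := E) (r := k * r) (List.ofFn v) (toSPP C)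
      (fun x hx u hu => by
        rw [List.mem_ofFn] at hx
        obtain ⟨i, rfl⟩ := hx
        exact mem_unionRed.2 ⟨f i, hvm i u hu⟩) hcard
    have he : unionRed C ∪ (List.ofFn v).toFinset
        = unionRed (MPP.apply (.compute m f v) C) := by
      rw [show unionRed (MPP.apply (.compute m f v) C)
          = Finset.univ.biUnion (MPP.addRed C f v) from rfl, unionRed_addRed]
    simpa [tr, toSPP, he, show (MPP.apply (.compute m f v) C).blue = C.blue from rfl] using this
  | removeRed j x =>
    by_cases h : ∃ j', j' ≠ j ∧ x ∈ C.red j'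
    · have he : toSPP (MPP.apply (.removeRed j x) C) = toSPP C := by
        simp only [toSPP, MPP.apply]
        congr 1
        ext y
        simp only [unionRed, Finset.mem_biUnion, Finset.mem_univ, true_and]
        constructor
        · rintro ⟨j', hj'⟩
          by_cases hjj : j' = j
          · subst hjj
            rw [Function.update_self] at hj'
            exact ⟨j', (Finset.mem_sdiff.1 hj').1⟩
          · rw [Function.update_of_ne hjj] at hj'
            exact ⟨j', hj'⟩
        · rintro ⟨j', hj'⟩
          by_cases hjj : j' = j
          · subst hjj
            by_cases hyx : y = x
            · subst hyx
              obtain ⟨j'', hj''ne, hj''⟩ := h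
              exact ⟨j'', by rwa [Function.update_of_ne hj''ne]⟩
            · refine ⟨j', ?_⟩
              rw [Function.update_self]
              exact Finset.mem_sdiff.2 ⟨hj', by simpa using hyx⟩
          · exact ⟨j', by rwa [Function.update_of_ne hjj]⟩
      rw [he]
      simpa [tr, h] using SPP.Run.nil (toSPP C)
    · have he : toSPP (MPP.apply (.removeRed j x) C)
          = ⟨(unionRed C).erase x, C.blue⟩ := by
        simp only [toSPP, MPP.apply]
        congr 1
        ext y
        simp only [unionRed, Finset.mem_biUnion, Finset.mem_univ, true_and,
          Finset.mem_erase]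
        push_neg at h
        constructor
        · rintro ⟨j', hj'⟩
          by_cases hjj : j' = j
          · subst hjj
            rw [Function.update_self, Finset.mem_sdiff] at hj'
            exact ⟨by simpa using hj'.2, ⟨j', hj'.1⟩⟩
          · rw [Function.update_of_ne hjj] at hj'
            refine ⟨?_, ⟨j', hj'⟩⟩
            rintro rfl
            exact (h j' hjj) hj'
        · rintro ⟨hyx, j', hj'⟩
          by_cases hjj : j' = j
          · subst hjj
            refine ⟨j', ?_⟩
            rw [Function.update_self]
            exact Finset.mem_sdiff.2 ⟨hj', by simpa using hyx⟩
          · exact ⟨j', by rwa [Function.update_of_ne hjj]⟩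
      have hval : SPP.Valid (k * r) (SPP.apply (.removeRed x) (toSPP C)) := by
        show ((unionRed C).erase x).card ≤ k * r
        have := congrArg SPP.Conf.red he
        calc ((unionRed C).erase x).card
            = (toSPP (MPP.apply (.removeRed j x) C)).red.card := by rw [he]
          _ ≤ k * r := card_unionRed_le hv
      have hrun : SPP.Run E (k * r) (toSPP C) [SPP.Move.removeRed x]
          ⟨(unionRed C).erase x, C.blue⟩ :=
        SPP.Run.cons trivial hval (SPP.Run.nil _)
      rw [he]
      simpa [tr, h] using hrun
  | removeBlue x =>
    have he : toSPP (MPP.apply (.removeBlue x) C)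
        = ⟨unionRed C, C.blue \ {x}⟩ := rfl
    have hval : SPP.Valid (k * r) (SPP.apply (.removeBlue x) (toSPP C)) := by
      show (unionRed C).card ≤ k * r
      exact card_unionRed_le (r := r) (C := C) hv
    have hrun : SPP.Run E (k * r) (toSPP C) [SPP.Move.removeBlue x]
        ⟨unionRed C, C.blue.erase x⟩ :=
      SPP.Run.cons trivial hval (SPP.Run.nil _)
    rw [he]
    have : C.blue \ {x} = C.blue.erase x := by
      ext y; simp [Finset.mem_sdiff, Finset.mem_erase, and_comm]
    rw [this]
    simpa [tr] using hrun

lemma ioCount_tr {E : V → V → Prop} (C : MPP.Conf V k) (mv : MPP.Move V k)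
    (hl : MPP.Legal E C mv) :
    SPP.ioCount (tr C mv) ≤ k * (if MPP.isIO mv then 1 else 0) := by
  cases mv with
  | save m f v =>
    have hm : m ≤ k := hl.1
    have : SPP.ioCount (tr C (.save m f v)) = m := by
      simp only [tr, SPP.ioCount, List.map_ofFn]
      rw [List.filter_eq_self.2]
      · simp
      · intro a ha
        rw [List.mem_ofFn] at ha
        obtain ⟨i, rfl⟩ := ha
        rfl
    simpa [this, MPP.isIO] using hm
  | load m f v =>
    have hm : m ≤ k := hl.1
    have : SPP.ioCount (tr C (.load m f v)) = m := by
      simp only [tr, SPP.ioCount, List.map_ofFn]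
      rw [List.filter_eq_self.2]
      · simp
      · intro a ha
        rw [List.mem_ofFn] at ha
        obtain ⟨i, rfl⟩ := ha
        rfl
    simpa [this, MPP.isIO] using hm
  | compute m f v =>
    simp [tr, SPP.ioCount, List.filter_map, SPP.isIO, Function.comp, MPP.isIO]
  | removeRed j x =>
    by_cases h : ∃ j', j' ≠ j ∧ x ∈ C.red j' <;>
      simp [tr, h, SPP.ioCount, SPP.isIO, MPP.isIO]
  | removeBlue x =>
    simp [tr, SPP.ioCount, SPP.isIO, MPP.isIO]

lemma runAll {E : V → V → Prop} {r : ℕ} {C C' : MPP.Conf V k}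
    {ms : List (MPP.Move V k)} (h : MPP.Run E r C ms C') :
    SPP.Run E (k * r) (toSPP C) (trRun C ms) (toSPP C') ∧
      SPP.ioCount (trRun C ms) ≤ k * MPP.ioCount ms := by
  induction h with
  | nil C => exact ⟨SPP.Run.nil _, by simp [trRun, SPP.ioCount, MPP.ioCount]⟩
  | @cons C C'' mv ms hl hv _ ih =>
    refine ⟨run_append (step C mv hl hv) ih.1, ?_⟩
    have h1 := ioCount_tr C mv hl
    have h2 := ih.2
    have hsplit : SPP.ioCount (trRun C (mv :: ms))
        = SPP.ioCount (tr C mv) + SPP.ioCount (trRun (MPP.apply mv C) ms) := by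
      simp [trRun, SPP.ioCount, List.filter_append]
    have hms : MPP.ioCount (mv :: ms)
        = (if MPP.isIO mv then 1 else 0) + MPP.ioCount ms := by
      by_cases h : MPP.isIO mv <;> simp [MPP.ioCount, List.filter_cons, h, Nat.add_comm]
    rw [hsplit, hms, Nat.mul_add]
    exact Nat.add_le_add h1 h2

end MPPtoSPP

/-- If every SPP pebbling strategy of `G` with memory bound `k·r`
uses at least `L` I/O moves, then every MPP pebbling strategy of `G` with `k`
processors and memory bound `r` per processor uses at least `L/k` I/O moves. -/
theorem stmt3 {V : Type} [Fintype V] [DecidableEq V] (E : V → V → Prop)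
    (hdag : IsDag E) (k r L : ℕ) (hk : 0 < k) (hr0 : 0 < r) (hL : 0 < L)
    (hSPP : ∀ ss : List (SPP.Move V), SPP.IsPebbling E (k * r) ss → L ≤ SPP.ioCount ss)
    (ms : List (MPP.Move V k)) (hms : MPP.IsPebbling E r ms) :
    (L : ℝ) / k ≤ (MPP.ioCount ms : ℝ) := by
  obtain ⟨Cf, hrun, hterm⟩ := hms
  obtain ⟨hr, hio⟩ := MPPtoSPP.runAll hrun
  have hinit : MPPtoSPP.toSPP (MPP.init V k) = SPP.init V := by
    simp only [MPPtoSPP.toSPP, MPP.init, SPP.init, MPPtoSPP.unionRed]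
    congr 1
    ext y
    simp
  have hpeb : SPP.IsPebbling E (k * r) (MPPtoSPP.trRun (MPP.init V k) ms) := by
    refine ⟨MPPtoSPP.toSPP Cf, by rwa [hinit] at hr, ?_⟩
    intro v hs
    rcases hterm v hs with h | ⟨j, hj⟩
    · exact Or.inl h
    · exact Or.inr (MPPtoSPP.mem_unionRed.2 ⟨j, hj⟩)
  have hL' : L ≤ k * MPP.ioCount ms := le_trans (hSPP _ hpeb) hio
  rw [div_le_iff₀ (by exact_mod_cast hk)]
  calc (L : ℝ) ≤ (k * MPP.ioCount ms : ℕ) := by exact_mod_cast hL'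
    _ = (MPP.ioCount ms : ℝ) * k := by push_cast; ring
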